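/- Let c' : ℤ → ZMod p be another sequence satisfying conditions (i), (ii), (iii) (with the coefficients in its recurrences given by its own values c'(3), ..., c'(9)). If c(n) = c'(n) for every integer n with 3 ≤ n ≤ 10, then c(n) = c'(n) for all n ∈ ℤ. -/
import Mathlib


theorem stmt9 (p : ℕ) [Fact p.Prime] (hodd : Odd p)
    (c : ℤ → ZMod p)
    (hneg : ∀ n : ℤ, c (-n) = - c n)
    (h0 : c 0 = 0) (h1 : c 1 = 0) (h2 : c 2 = 1)
    (hS8 : ∀ n : ℤ, c 4 * c (n + 4) * c (n - 4) =
      c 3 * c 5 * c (n + 3) * c (n - 3)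
      + (c 4 ^ 3 - c 3 ^ 3 * c 5) * c (n + 2) * c (n - 2)
      + c 3 ^ 2 * c 6 * c (n + 1) * c (n - 1)
      - c 4 * c 6 * c n ^ 2)
    (hS9 : ∀ n : ℤ, c 3 * c 5 * c (n + 5) * c (n - 4) =
      c 3 ^ 2 * c 6 * c (n + 4) * c (n - 3)
      + c 4 * (c 5 ^ 2 - c 3 ^ 2 * c 6) * c (n + 3) * c (n - 2)
      + c 3 * c 4 * c 7 * c (n + 2) * c (n - 1)
      - c 5 * c 7 * c (n + 1) * c n)
    (hS10 : ∀ n : ℤ, c 4 * c (n + 5) * c (n - 5) =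
      c 4 * c 6 * c (n + 3) * c (n - 3)
      + c 4 * (c 5 ^ 2 - c 3 ^ 2 * c 6) * c (n + 2) * c (n - 2)
      + (c 3 ^ 3 * c 7 - c 8) * c (n + 1) * c (n - 1)
      - c 3 * c 4 * c 7 * c n ^ 2)
    (hS11 : ∀ n : ℤ, c 3 * c 5 * c (n + 6) * c (n - 5) =
      c 3 * c 4 * c 7 * c (n + 4) * c (n - 3)
      + (c 5 ^ 2 * c 6 - c 3 * c 4 ^ 2 * c 7) * c (n + 3) * c (n - 2)
      + c 3 * (c 3 * c 4 * c 8 - c 9) * c (n + 2) * c (n - 1)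
      - c 3 * c 5 * c 8 * c (n + 1) * c n)
    (h3 : c 3 ≠ 0) (h4 : c 4 ≠ 0) (h5 : c 5 ≠ 0)
    (hfour : ∀ m : ℤ, c m ≠ 0 ∨ c (m + 1) ≠ 0 ∨ c (m + 2) ≠ 0 ∨ c (m + 3) ≠ 0)
    (c' : ℤ → ZMod p)
    (hneg' : ∀ n : ℤ, c' (-n) = - c' n)
    (h0' : c' 0 = 0) (h1' : c' 1 = 0) (h2' : c' 2 = 1)
    (hS8' : ∀ n : ℤ, c' 4 * c' (n + 4) * c' (n - 4) =
      c' 3 * c' 5 * c' (n + 3) * c' (n - 3)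
      + (c' 4 ^ 3 - c' 3 ^ 3 * c' 5) * c' (n + 2) * c' (n - 2)
      + c' 3 ^ 2 * c' 6 * c' (n + 1) * c' (n - 1)
      - c' 4 * c' 6 * c' n ^ 2)
    (hS9' : ∀ n : ℤ, c' 3 * c' 5 * c' (n + 5) * c' (n - 4) =
      c' 3 ^ 2 * c' 6 * c' (n + 4) * c' (n - 3)
      + c' 4 * (c' 5 ^ 2 - c' 3 ^ 2 * c' 6) * c' (n + 3) * c' (n - 2)
      + c' 3 * c' 4 * c' 7 * c' (n + 2) * c' (n - 1)
      - c' 5 * c' 7 * c' (n + 1) * c' n)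
    (hS10' : ∀ n : ℤ, c' 4 * c' (n + 5) * c' (n - 5) =
      c' 4 * c' 6 * c' (n + 3) * c' (n - 3)
      + c' 4 * (c' 5 ^ 2 - c' 3 ^ 2 * c' 6) * c' (n + 2) * c' (n - 2)
      + (c' 3 ^ 3 * c' 7 - c' 8) * c' (n + 1) * c' (n - 1)
      - c' 3 * c' 4 * c' 7 * c' n ^ 2)
    (hS11' : ∀ n : ℤ, c' 3 * c' 5 * c' (n + 6) * c' (n - 5) =
      c' 3 * c' 4 * c' 7 * c' (n + 4) * c' (n - 3)
      + (c' 5 ^ 2 * c' 6 - c' 3 * c' 4 ^ 2 * c' 7) * c' (n + 3) * c' (n - 2)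
      + c' 3 * (c' 3 * c' 4 * c' 8 - c' 9) * c' (n + 2) * c' (n - 1)
      - c' 3 * c' 5 * c' 8 * c' (n + 1) * c' n)
    (heq : ∀ n : ℤ, 3 ≤ n → n ≤ 10 → c n = c' n) :
    ∀ n : ℤ, c n = c' n := by
  have main : ∀ N : ℕ, ∀ j : ℤ, 0 ≤ j → j ≤ (N : ℤ) → c j = c' j := by
    intro N
    induction N with
    | zero =>
      intro j hj0 hjN
      have : j = 0 := by omega
      subst this
      rw [h0, h0']
    | succ N IH =>
      intro j hj0 hjN
      by_cases hle : j ≤ (N : ℤ)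
      · exact IH j hj0 hle
      by_cases hsmall : j ≤ 10
      · have hj : j = 1 ∨ j = 2 ∨ (3 ≤ j ∧ j ≤ 10) := by omega
        rcases hj with rfl | rfl | ⟨ha, hb⟩
        · rw [h1, h1']
        · rw [h2, h2']
        · exact heq j ha hb
      push_neg at hsmall
      have h11 : 11 ≤ j := hsmall
      have hc' : ∀ k : ℤ, 0 ≤ k → k < j → c' k = c k := fun k hk hk' =>
        (IH k hk (by omega)).symm
      have e3 : c' 3 = c 3 := hc' 3 (by norm_num) (by omega)
      have e4 : c' 4 = c 4 := hc' 4 (by norm_num) (by omega)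
      have e5 : c' 5 = c 5 := hc' 5 (by norm_num) (by omega)
      have e6 : c' 6 = c 6 := hc' 6 (by norm_num) (by omega)
      have e7 : c' 7 = c 7 := hc' 7 (by norm_num) (by omega)
      have e8 : c' 8 = c 8 := hc' 8 (by norm_num) (by omega)
      have e9 : c' 9 = c 9 := hc' 9 (by norm_num) (by omega)
      rcases hfour (j - 11) with hA | hA | hA | hA
      · -- c (j - 11) ≠ 0, use S11 at j - 6
        have e1 := hS11 (j - 6)
        have e2 := hS11' (j - 6)
        simp only [show j - 6 + 6 = j from by ring, show j - 6 - 5 = j - 11 from by ring,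
          show j - 6 + 4 = j - 2 from by ring, show j - 6 - 3 = j - 9 from by ring,
          show j - 6 + 3 = j - 3 from by ring, show j - 6 - 2 = j - 8 from by ring,
          show j - 6 + 2 = j - 4 from by ring, show j - 6 - 1 = j - 7 from by ring,
          show j - 6 + 1 = j - 5 from by ring] at e1 e2
        simp only [e3, e4, e5, e6, e7, e8, e9,
          hc' (j - 2) (by omega) (by omega), hc' (j - 3) (by omega) (by omega),
          hc' (j - 4) (by omega) (by omega), hc' (j - 5) (by omega) (by omega),
          hc' (j - 6) (by omega) (by omega), hc' (j - 7) (by omega) (by omega),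
          hc' (j - 8) (by omega) (by omega), hc' (j - 9) (by omega) (by omega),
          hc' (j - 11) (by omega) (by omega)] at e2
        have hz : (c j - c' j) * (c 3 * c 5 * c (j - 11)) = 0 := by
          linear_combination e1 - e2
        rcases mul_eq_zero.mp hz with h | h
        · exact sub_eq_zero.mp h
        · exact absurd h (mul_ne_zero (mul_ne_zero h3 h5) hA)
      · -- c (j - 10) ≠ 0, use S10 at j - 5
        rw [show j - 11 + 1 = j - 10 from by ring] at hA
        have e1 := hS10 (j - 5)
        have e2 := hS10' (j - 5)
        simp only [show j - 5 + 5 = j from by ring, show j - 5 - 5 = j - 10 from by ring,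
          show j - 5 + 3 = j - 2 from by ring, show j - 5 - 3 = j - 8 from by ring,
          show j - 5 + 2 = j - 3 from by ring, show j - 5 - 2 = j - 7 from by ring,
          show j - 5 + 1 = j - 4 from by ring, show j - 5 - 1 = j - 6 from by ring] at e1 e2
        simp only [e3, e4, e5, e6, e7, e8,
          hc' (j - 2) (by omega) (by omega), hc' (j - 3) (by omega) (by omega),
          hc' (j - 4) (by omega) (by omega), hc' (j - 5) (by omega) (by omega),
          hc' (j - 6) (by omega) (by omega), hc' (j - 7) (by omega) (by omega),
          hc' (j - 8) (by omega) (by omega), hc' (j - 10) (by omega) (by omega)] at e2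
        have hz : (c j - c' j) * (c 4 * c (j - 10)) = 0 := by
          linear_combination e1 - e2
        rcases mul_eq_zero.mp hz with h | h
        · exact sub_eq_zero.mp h
        · exact absurd h (mul_ne_zero h4 hA)
      · -- c (j - 9) ≠ 0, use S9 at j - 5
        rw [show j - 11 + 2 = j - 9 from by ring] at hA
        have e1 := hS9 (j - 5)
        have e2 := hS9' (j - 5)
        simp only [show j - 5 + 5 = j from by ring, show j - 5 - 4 = j - 9 from by ring,
          show j - 5 + 4 = j - 1 from by ring, show j - 5 - 3 = j - 8 from by ring,
          show j - 5 + 3 = j - 2 from by ring, show j - 5 - 2 = j - 7 from by ring,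
          show j - 5 + 2 = j - 3 from by ring, show j - 5 - 1 = j - 6 from by ring,
          show j - 5 + 1 = j - 4 from by ring] at e1 e2
        simp only [e3, e4, e5, e6, e7,
          hc' (j - 1) (by omega) (by omega), hc' (j - 2) (by omega) (by omega),
          hc' (j - 3) (by omega) (by omega), hc' (j - 4) (by omega) (by omega),
          hc' (j - 5) (by omega) (by omega), hc' (j - 6) (by omega) (by omega),
          hc' (j - 7) (by omega) (by omega), hc' (j - 8) (by omega) (by omega),
          hc' (j - 9) (by omega) (by omega)] at e2
        have hz : (c j - c' j) * (c 3 * c 5 * c (j - 9)) = 0 := by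
          linear_combination e1 - e2
        rcases mul_eq_zero.mp hz with h | h
        · exact sub_eq_zero.mp h
        · exact absurd h (mul_ne_zero (mul_ne_zero h3 h5) hA)
      · -- c (j - 8) ≠ 0, use S8 at j - 4
        rw [show j - 11 + 3 = j - 8 from by ring] at hA
        have e1 := hS8 (j - 4)
        have e2 := hS8' (j - 4)
        simp only [show j - 4 + 4 = j from by ring, show j - 4 - 4 = j - 8 from by ring,
          show j - 4 + 3 = j - 1 from by ring, show j - 4 - 3 = j - 7 from by ring,
          show j - 4 + 2 = j - 2 from by ring, show j - 4 - 2 = j - 6 from by ring,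
          show j - 4 + 1 = j - 3 from by ring, show j - 4 - 1 = j - 5 from by ring] at e1 e2
        simp only [e3, e4, e5, e6,
          hc' (j - 1) (by omega) (by omega), hc' (j - 2) (by omega) (by omega),
          hc' (j - 3) (by omega) (by omega), hc' (j - 4) (by omega) (by omega),
          hc' (j - 5) (by omega) (by omega), hc' (j - 6) (by omega) (by omega),
          hc' (j - 7) (by omega) (by omega), hc' (j - 8) (by omega) (by omega)] at e2
        have hz : (c j - c' j) * (c 4 * c (j - 8)) = 0 := by
          linear_combination e1 - e2
        rcases mul_eq_zero.mp hz with h | h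
        · exact sub_eq_zero.mp h
        · exact absurd h (mul_ne_zero h4 hA)
  intro n
  rcases le_or_gt 0 n with hn | hn
  · exact main n.toNat n hn (Int.self_le_toNat n)
  · have hpos := main (-n).toNat (-n) (by omega) (Int.self_le_toNat _)
    have en := hneg (-n)
    have en' := hneg' (-n)
    rw [neg_neg] at en en'
    rw [en, en', hpos]
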